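/- For d = 1 or d = 2 and 0 ≤ β < 1, with ω Rademacher disorder, the series Σ_{n=1}^∞ E[(2π Σ_{i=0}^{n-1}(1+βω_i)^{-1})^{-d/2}]·x^n diverges as x → 1⁻ for every ε > 0 scaling; consequently, for every ε > 0 the equation ε·Σ_{n=1}^∞ E[(2π Σ_{i=0}^{n-1}(1+βω_i)^{-1})^{-d/2}]·x^n = 1 has a solution x ∈ (0,1), i.e. the annealed critical point ε_c^a(β) = 0. -/

import Mathlib

open MeasureTheory ProbabilityTheory Filter Finset Real

set_option maxHeartbeats 1000000 in
/-- For `d = 1` or `d = 2` with Rademacher disorder, the annealed generating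
function blows up at `x → 1⁻`, so for every `ε > 0` the renewal equation
`ε·Σ_n E[(2π Σ_{i<n}(1+βω_i)⁻¹)^{-d/2}]·xⁿ = 1` has a solution `x ∈ (0,1)`;
hence the annealed critical point vanishes. -/
theorem annealed_critical_point_zero_low_dim {Ω : Type*} [MeasurableSpace Ω]
    (μ : Measure Ω) [IsProbabilityMeasure μ]
    (ω : ℕ → Ω → ℝ) (hmeas : ∀ n, Measurable (ω n))
    (hindep : iIndepFun ω μ)
    (hdist : ∀ n, μ.map (ω n)
      = (2 : ENNReal)⁻¹ • (Measure.dirac (1 : ℝ) + Measure.dirac (-1 : ℝ)))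
    (β : ℝ) (hβ0 : 0 ≤ β) (hβ1 : β < 1) (d : ℕ) (hd : d = 1 ∨ d = 2)
    (G : ℝ → ℝ)
    (hG : ∀ x : ℝ, G x = ∑' n : ℕ,
      (∫ a, (2 * π * ∑ i ∈ Finset.range (n + 1), (1 + β * ω i a)⁻¹)
          ^ (-(d : ℝ) / 2) ∂μ) * x ^ (n + 1)) :
    Tendsto G (nhdsWithin 1 (Set.Iio 1)) atTop ∧
    ∀ ε : ℝ, 0 < ε → ∃ x ∈ Set.Ioo (0 : ℝ) 1, ε * G x = 1 := by
  have hβpos : (0:ℝ) < 1 - β := by linarith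
  have hπ : (0:ℝ) < π := Real.pi_pos
  set e : ℝ := -(d:ℝ)/2 with he
  have he0 : e ≤ 0 := by
    rw [he]; have : (0:ℝ) ≤ (d:ℝ) := Nat.cast_nonneg d; linarith
  have hd2 : (d:ℝ) ≤ 2 := by rcases hd with h | h <;> simp [h] <;> norm_num
  have hem1 : (-1:ℝ) ≤ e := by rw [he]; linarith
  set c : ℝ := (2*π/(1-β)) ^ e with hc
  have hbase : (0:ℝ) < 2*π/(1-β) := by positivity
  have hcpos : 0 < c := Real.rpow_pos_of_pos hbase e
  -- the a.e. Rademacher event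
  have hae : ∀ᵐ a ∂μ, ∀ i, ω i a = 1 ∨ ω i a = -1 := by
    rw [ae_all_iff]
    intro i
    have hs : MeasurableSet ({1, -1}ᶜ : Set ℝ) :=
      (Set.Finite.measurableSet (by simp : ({1, -1} : Set ℝ).Finite)).compl
    have hkey : μ (ω i ⁻¹' ({1, -1}ᶜ : Set ℝ)) = 0 := by
      have hmap := Measure.map_apply (μ := μ) (hmeas i) hs
      rw [hdist i] at hmap
      have h1 : (1:ℝ) ∉ ({1, -1}ᶜ : Set ℝ) := by simp
      have h2 : (-1:ℝ) ∉ ({1, -1}ᶜ : Set ℝ) := by simp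
      rw [Measure.smul_apply, Measure.add_apply,
        Measure.dirac_apply' _ hs, Measure.dirac_apply' _ hs,
        Set.indicator_of_notMem h1, Set.indicator_of_notMem h2] at hmap
      simpa using hmap.symm
    refine measure_mono_null ?_ hkey
    intro a ha
    simp only [Set.mem_compl_iff, Set.mem_setOf_eq, not_or] at ha
    simp only [Set.mem_preimage, Set.mem_compl_iff, Set.mem_insert_iff, Set.mem_singleton_iff, not_or]
    exact ha
  -- notation for integrand and integral
  set F : ℕ → Ω → ℝ := fun n a =>
    (2 * π * ∑ i ∈ Finset.range (n + 1), (1 + β * ω i a)⁻¹) ^ e with hF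
  set I : ℕ → ℝ := fun n => ∫ a, F n a ∂μ with hI
  -- pointwise bounds on the good event
  have hpt : ∀ n : ℕ, ∀ a : Ω, (∀ i, ω i a = 1 ∨ ω i a = -1) →
      c * ((n:ℝ)+1)⁻¹ ≤ F n a ∧ F n a ≤ 1 := by
    intro n a ha
    set S := ∑ i ∈ Finset.range (n + 1), (1 + β * ω i a)⁻¹ with hS
    have hterm : ∀ i ∈ Finset.range (n+1),
        (1/2 : ℝ) ≤ (1 + β * ω i a)⁻¹ ∧ (1 + β * ω i a)⁻¹ ≤ (1-β)⁻¹ := by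
      intro i _
      rcases ha i with h | h <;> rw [h]
      · constructor
        · rw [one_div]
          exact inv_anti₀ (by linarith) (by linarith)
        · exact inv_anti₀ hβpos (by linarith)
      · have h1 : 1 + β * (-1) = 1 - β := by ring
        rw [h1]
        refine ⟨?_, le_refl _⟩
        rw [one_div]
        exact inv_anti₀ hβpos (by linarith)
    have hSlb : ((n:ℝ)+1)/2 ≤ S := by
      have h := Finset.sum_le_sum (fun i hi => (hterm i hi).1)
      have heq : ∑ _i ∈ Finset.range (n+1), (1/2:ℝ) = ((n:ℝ)+1)/2 := by
        rw [Finset.sum_const, Finset.card_range, nsmul_eq_mul]; push_cast; ring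
      rw [heq] at h; exact h
    have hSub : S ≤ ((n:ℝ)+1) * (1-β)⁻¹ := by
      have h := Finset.sum_le_sum (fun i hi => (hterm i hi).2)
      have heq : ∑ _i ∈ Finset.range (n+1), ((1-β)⁻¹ : ℝ) = ((n:ℝ)+1) * (1-β)⁻¹ := by
        rw [Finset.sum_const, Finset.card_range, nsmul_eq_mul]; push_cast; ring
      rw [heq] at h; exact h
    have hn1 : (1:ℝ) ≤ (n:ℝ)+1 := by
      have : (0:ℝ) ≤ (n:ℝ) := Nat.cast_nonneg n; linarith
    have hSpos : 0 < S := lt_of_lt_of_le (by positivity) hSlb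
    have hbpos : 0 < 2 * π * S := by positivity
    constructor
    · -- lower bound
      have h1 : 2 * π * S ≤ (2*π/(1-β)) * ((n:ℝ)+1) := by
        have h := mul_le_mul_of_nonneg_left hSub (by positivity : (0:ℝ) ≤ 2*π)
        calc 2 * π * S ≤ 2*π * (((n:ℝ)+1) * (1-β)⁻¹) := h
          _ = (2*π/(1-β)) * ((n:ℝ)+1) := by field_simp
      have h2 : ((2*π/(1-β)) * ((n:ℝ)+1)) ^ e ≤ (2*π*S) ^ e :=
        Real.rpow_le_rpow_of_nonpos hbpos h1 he0
      have h3 : ((2*π/(1-β)) * ((n:ℝ)+1)) ^ e = c * ((n:ℝ)+1) ^ e :=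
        Real.mul_rpow (le_of_lt hbase) (by linarith)
      have h4 : ((n:ℝ)+1) ^ (-1:ℝ) ≤ ((n:ℝ)+1) ^ e :=
        Real.rpow_le_rpow_of_exponent_le hn1 hem1
      have h5 : c * ((n:ℝ)+1)⁻¹ ≤ c * ((n:ℝ)+1) ^ e := by
        rw [← Real.rpow_neg_one]
        exact mul_le_mul_of_nonneg_left h4 (le_of_lt hcpos)
      calc c * ((n:ℝ)+1)⁻¹ ≤ c * ((n:ℝ)+1) ^ e := h5
        _ = ((2*π/(1-β)) * ((n:ℝ)+1)) ^ e := h3.symm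
        _ ≤ (2*π*S) ^ e := h2
    · -- upper bound
      have h1 : (1:ℝ) ≤ 2 * π * S := by
        have hh : (1:ℝ)/2 ≤ S := le_trans (by linarith) hSlb
        nlinarith [Real.pi_gt_three]
      exact Real.rpow_le_one_of_one_le_of_nonpos h1 he0
  -- measurability / integrability
  have hFmeas : ∀ n, Measurable (F n) := by
    intro n
    have hm : Measurable (fun a => 2 * π * ∑ i ∈ Finset.range (n + 1), (1 + β * ω i a)⁻¹) := by
      apply Measurable.const_mul
      apply Finset.measurable_sum
      intro i _
      exact ((measurable_const.add ((hmeas i).const_mul β)).inv)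
    measurability
  have hFint : ∀ n, Integrable (F n) μ := by
    intro n
    refine Integrable.mono' (integrable_const 1) (hFmeas n).aestronglyMeasurable ?_
    filter_upwards [hae] with a ha
    have h := hpt n a ha
    have h0 : 0 ≤ F n a := le_trans (by positivity) h.1
    rw [Real.norm_eq_abs, abs_of_nonneg h0]
    exact h.2
  have hIub : ∀ n : ℕ, I n ≤ 1 := by
    intro n
    have h := integral_mono_ae (hFint n) (integrable_const 1)
      (by filter_upwards [hae] with a ha; exact (hpt n a ha).2)
    simpa using h
  have hIlb : ∀ n : ℕ, c * ((n:ℝ)+1)⁻¹ ≤ I n := by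
    intro n
    have h := integral_mono_ae (integrable_const (c * ((n:ℝ)+1)⁻¹)) (hFint n)
      (by filter_upwards [hae] with a ha; exact (hpt n a ha).1)
    simpa using h
  have hInn : ∀ n : ℕ, 0 ≤ I n := fun n => le_trans (by positivity) (hIlb n)
  -- lower bound on G
  have hGlb : ∀ x : ℝ, x ∈ Set.Ioo (0:ℝ) 1 → c * (-Real.log (1 - x)) ≤ G x := by
    intro x hx
    obtain ⟨hx0, hx1⟩ := hx
    have habs : |x| < 1 := by rw [abs_of_pos hx0]; exact hx1
    have hgeo : Summable (fun n : ℕ => x ^ (n+1)) := by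
      have h := summable_geometric_of_lt_one (le_of_lt hx0) hx1
      exact (summable_nat_add_iff 1).mpr h
    have hsumG : Summable (fun n : ℕ => I n * x ^ (n+1)) := by
      refine Summable.of_nonneg_of_le (fun n => ?_) (fun n => ?_) hgeo
      · exact mul_nonneg (hInn n) (by positivity)
      · calc I n * x ^ (n+1) ≤ 1 * x ^ (n+1) :=
            mul_le_mul_of_nonneg_right (hIub n) (by positivity)
          _ = x ^ (n+1) := one_mul _
    have hlog := Real.hasSum_pow_div_log_of_abs_lt_one habs
    have hlog' : HasSum (fun n : ℕ => c * (x ^ (n+1) / ((n:ℝ)+1)))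
        (c * (-Real.log (1 - x))) := hlog.mul_left c
    have hle : ∀ n : ℕ, c * (x ^ (n+1) / ((n:ℝ)+1)) ≤ I n * x ^ (n+1) := by
      intro n
      have h1 : c * (x ^ (n+1) / ((n:ℝ)+1)) = (c * ((n:ℝ)+1)⁻¹) * x ^ (n+1) := by ring
      rw [h1]
      exact mul_le_mul_of_nonneg_right (hIlb n) (by positivity)
    have h := Summable.tsum_le_tsum hle hlog'.summable hsumG
    rw [hlog'.tsum_eq] at h
    rw [hG x]
    exact h
  -- the auxiliary tendsto
  have h1x : Tendsto (fun x : ℝ => 1 - x) (nhdsWithin 1 (Set.Iio 1))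
      (nhdsWithin 0 (Set.Ioi 0)) := by
    apply tendsto_nhdsWithin_of_tendsto_nhds_of_eventually_within
    · have h : Tendsto (fun x : ℝ => 1 - x) (nhds 1) (nhds 0) := by
        have hcont : Continuous (fun x : ℝ => 1 - x) := by continuity
        simpa using hcont.tendsto 1
      exact h.mono_left nhdsWithin_le_nhds
    · filter_upwards [self_mem_nhdsWithin] with x hx
      simp only [Set.mem_Iio] at hx
      simp only [Set.mem_Ioi]
      linarith
  have hlogt : Tendsto (fun x : ℝ => Real.log (1 - x)) (nhdsWithin 1 (Set.Iio 1)) atBot :=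
    Real.tendsto_log_nhdsGT_zero.comp h1x
  have haux : Tendsto (fun x : ℝ => c * (-Real.log (1 - x)))
      (nhdsWithin 1 (Set.Iio 1)) atTop :=
    Tendsto.const_mul_atTop hcpos (tendsto_neg_atTop_iff.mpr hlogt)
  have hIoo : Set.Ioo (0:ℝ) 1 ∈ nhdsWithin 1 (Set.Iio 1) :=
    Ioo_mem_nhdsLT_of_mem (by constructor <;> norm_num)
  have htend : Tendsto G (nhdsWithin 1 (Set.Iio 1)) atTop := by
    apply tendsto_atTop_mono' _ _ haux
    filter_upwards [hIoo] with x hx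
    exact hGlb x hx
  refine ⟨htend, ?_⟩
  intro ε hε
  have hεtend : Tendsto (fun x => ε * G x) (nhdsWithin 1 (Set.Iio 1)) atTop :=
    Tendsto.const_mul_atTop hε htend
  have hev : ∀ᶠ x in nhdsWithin 1 (Set.Iio 1), 2 ≤ ε * G x :=
    hεtend.eventually_ge_atTop 2
  obtain ⟨r, hr2, hrIoo⟩ := (hev.and (eventually_of_mem hIoo (fun x hx => hx))).exists
  obtain ⟨hr0, hr1⟩ := hrIoo
  -- continuity of G on [0, r]
  have hsum_r : Summable (fun n : ℕ => r ^ (n+1)) := by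
    have h := summable_geometric_of_lt_one (le_of_lt hr0) hr1
    exact (summable_nat_add_iff 1).mpr h
  have hcont : ContinuousOn (fun x : ℝ => ∑' n : ℕ, I n * x ^ (n+1)) (Set.Icc 0 r) := by
    apply continuousOn_tsum (u := fun n : ℕ => r ^ (n+1))
    · intro n; exact (continuous_const.mul (continuous_pow (n+1))).continuousOn
    · exact hsum_r
    · intro n x hx
      obtain ⟨hx0, hxr⟩ := hx
      rw [Real.norm_eq_abs, abs_mul, abs_of_nonneg (hInn n),
        abs_of_nonneg (pow_nonneg hx0 _)]
      calc I n * x ^ (n+1) ≤ 1 * x ^ (n+1) :=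
            mul_le_mul_of_nonneg_right (hIub n) (by positivity)
        _ = x ^ (n+1) := one_mul _
        _ ≤ r ^ (n+1) := pow_le_pow_left₀ hx0 hxr _
  have hGcont : ContinuousOn G (Set.Icc 0 r) := hcont.congr (fun x _ => hG x)
  have hG0 : G 0 = 0 := by
    rw [hG 0]
    simp
  have himap := intermediate_value_Icc (le_of_lt hr0)
    (continuousOn_const.mul hGcont : ContinuousOn (fun x => ε * G x) (Set.Icc 0 r))
  have h1mem : (1:ℝ) ∈ Set.Icc (ε * G 0) (ε * G r) := by
    constructor
    · rw [hG0]; simp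
    · linarith
  obtain ⟨x, hxmem, hxeq⟩ := himap h1mem
  refine ⟨x, ⟨?_, lt_of_le_of_lt hxmem.2 hr1⟩, hxeq⟩
  rcases lt_or_eq_of_le hxmem.1 with h | h
  · exact h
  · exfalso
    have hx0 : ε * G x = 1 := hxeq
    rw [← h, hG0] at hx0
    simp at hx0
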